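/- Every bounded Borel-measurable sigmoidal function with limits (0, C), C ≠ 0, is discriminatory with respect to the MPS feature class: let σ : ℝ → ℝ be bounded and Borel measurable with σ(t) → 0 as t → −∞ and σ(t) → C as t → +∞, where C ≠ 0, and let μ be a finite signed regular Borel measure on [0,1]ⁿ. If ∫_{[0,1]ⁿ} σ(λ·p(x) + η) dμ(x) = 0 for every multilinear polynomial p on ℝⁿ and all λ, η ∈ ℝ, then μ = 0. -/

import Mathlib

open MeasureTheory

/-- A multilinear polynomial on `ℝⁿ`: `p(x) = Σ_{s ∈ {0,1}ⁿ} W_s ∏_{i : s i = 1} xᵢ`.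
These are exactly the contractions of an MPS whose site kernel maps are
`φ(xᵢ) = (xᵢ, 1)`. -/
def IsMultilinearPoly {n : ℕ} (p : (Fin n → ℝ) → ℝ) : Prop :=
  ∃ W : (Fin n → Bool) → ℝ,
    ∀ x : Fin n → ℝ,
      p x = ∑ s : Fin n → Bool, W s * ∏ i : Fin n, if s i then x i else 1

lemma linear_isMultilinearPoly {n : ℕ} (y : Fin n → ℝ) :
    IsMultilinearPoly (fun x => ∑ i, y i * x i) := by
  classical
  refine ⟨fun s => ∑ i, if s = (fun j => decide (j = i)) then y i else 0, fun x => ?_⟩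
  rw [Finset.sum_congr rfl (fun s _ => Finset.sum_mul ..)]
  rw [Finset.sum_comm]
  refine Finset.sum_congr rfl fun i _ => ?_
  rw [Finset.sum_eq_single (fun j => decide (j = i))]
  · simp [decide_eq_true_eq]
  · intro b _ hb; simp [hb]
  · simp

lemma sw_exp_approx {n : ℕ} (F : (Fin n → ℝ) → ℝ) (hF : Continuous F) (ε : ℝ) (hε : 0 < ε) :
    ∃ (m : ℕ) (c : Fin m → ℝ) (y : Fin m → (Fin n → ℝ)),
      ∀ x ∈ Set.Icc (0 : Fin n → ℝ) 1,
        |F x - ∑ j, c j * Real.exp (∑ i, y j i * x i)| ≤ ε := by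
  classical
  set K := Set.Icc (0 : Fin n → ℝ) 1 with hKdef
  haveI : CompactSpace K := isCompact_iff_compactSpace.mp isCompact_Icc
  have hEc : ∀ y : Fin n → ℝ, Continuous fun x : K => Real.exp (∑ i, y i * (x : Fin n → ℝ) i) :=
    fun y => Real.continuous_exp.comp
      ((continuous_finset_sum _ fun i _ => (continuous_const.mul
        ((continuous_apply i).comp continuous_subtype_val))))
  set E : (Fin n → ℝ) → C(K, ℝ) := fun y => ⟨_, hEc y⟩ with hEdef
  have hE1 : E 0 = 1 := by
    ext x; simp [hEdef]
  have hEmul : ∀ y z, E y * E z = E (y + z) := by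
    intro y z; ext x
    simp [hEdef, ← Real.exp_add, ← Finset.sum_add_distrib, add_mul]
  set p : Submodule ℝ C(K, ℝ) := Submodule.span ℝ (Set.range E) with hpdef
  have hmem : ∀ y, E y ∈ p := fun y => Submodule.subset_span ⟨y, rfl⟩
  have h1 : (1 : C(K, ℝ)) ∈ p := hE1 ▸ hmem 0
  have hmul : ∀ a b : C(K, ℝ), a ∈ p → b ∈ p → a * b ∈ p := by
    have step : ∀ (y : Fin n → ℝ) (b : C(K, ℝ)), b ∈ p → E y * b ∈ p := by
      intro y b hb
      refine Submodule.span_induction ?_ ?_ ?_ ?_ hb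
      · rintro _ ⟨z, rfl⟩; rw [hEmul]; exact hmem _
      · simp
      · intro u v _ _ hu hv; rw [mul_add]; exact add_mem hu hv
      · intro c u _ hu; rw [mul_smul_comm]; exact Submodule.smul_mem _ _ hu
    intro a b ha hb
    refine Submodule.span_induction ?_ ?_ ?_ ?_ ha
    · rintro _ ⟨z, rfl⟩; exact step z b hb
    · simp
    · intro u v _ _ hu hv; rw [add_mul]; exact add_mem hu hv
    · intro c u _ hu; rw [smul_mul_assoc]; exact Submodule.smul_mem _ _ hu
  set A : Subalgebra ℝ C(K, ℝ) := p.toSubalgebra h1 hmul with hAdef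
  have hsep : A.SeparatesPoints := by
    rintro ⟨a, ha⟩ ⟨b, hb⟩ hab
    have : a ≠ b := fun h => hab (Subtype.ext h)
    obtain ⟨i, hi⟩ := Function.ne_iff.mp this
    refine ⟨_, ⟨E (Pi.single i 1), hmem _, rfl⟩, ?_⟩
    have key : ∀ v : Fin n → ℝ, (∑ j, (Pi.single i (1:ℝ) : Fin n → ℝ) j * v j) = v i := by
      intro v
      rw [Finset.sum_eq_single i] <;> simp +contextual [Pi.single_apply]
    simp only [hEdef, ContinuousMap.coe_mk, key]
    exact fun h => hi (Real.exp_injective h)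
  have hdense := ContinuousMap.subalgebra_topologicalClosure_eq_top_of_separatesPoints A hsep
  set fK : C(K, ℝ) := ⟨fun x => F x, hF.comp continuous_subtype_val⟩ with hfKdef
  have hfK : fK ∈ closure (A : Set C(K, ℝ)) := by
    have : fK ∈ A.topologicalClosure := hdense ▸ Algebra.mem_top
    exact this
  obtain ⟨g, hgA, hgd⟩ := Metric.mem_closure_iff.mp hfK ε hε
  have hgp : g ∈ p := hgA
  obtain ⟨m, c, v, hsum⟩ := (Submodule.mem_span_set').mp hgp
  choose y hy using fun j => (v j).2
  refine ⟨m, c, y, fun x hx => ?_⟩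
  have hgx : g ⟨x, hx⟩ = ∑ j, c j * Real.exp (∑ i, y j i * x i) := by
    rw [← hsum]
    have : ((∑ j, c j • (v j : C(K, ℝ))) : C(K, ℝ)) ⟨x, hx⟩
        = ∑ j, c j • ((v j : C(K, ℝ)) ⟨x, hx⟩) := by
      simp
    rw [this]
    refine Finset.sum_congr rfl fun j _ => ?_
    rw [← hy j]
    simp [hEdef]
  have h2 := ContinuousMap.dist_apply_le_dist (f := fK) (g := g) ⟨x, hx⟩
  rw [Real.dist_eq] at h2
  have h3 : |F x - g ⟨x, hx⟩| ≤ dist fK g := h2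
  rw [hgx] at h3
  exact h3.trans hgd.le

theorem measurable_sigmoidal_discriminatory (n : ℕ) (σ : ℝ → ℝ)
    (hσm : Measurable σ) (hσb : ∃ M, ∀ t, |σ t| ≤ M) (C : ℝ) (hC : C ≠ 0)
    (hbot : Filter.Tendsto σ Filter.atBot (nhds 0))
    (htop : Filter.Tendsto σ Filter.atTop (nhds C))
    (μ : SignedMeasure (Fin n → ℝ))
    (hsupp : ∀ A : Set (Fin n → ℝ), MeasurableSet A →
      A ⊆ (Set.Icc (0 : Fin n → ℝ) 1)ᶜ → μ A = 0)
    (hreg₁ : μ.toJordanDecomposition.posPart.Regular)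
    (hreg₂ : μ.toJordanDecomposition.negPart.Regular)
    (hint : ∀ p : (Fin n → ℝ) → ℝ, IsMultilinearPoly p → ∀ lam eta : ℝ,
      (∫ x in Set.Icc (0 : Fin n → ℝ) 1, σ (lam * p x + eta)
          ∂μ.toJordanDecomposition.posPart)
        - (∫ x in Set.Icc (0 : Fin n → ℝ) 1, σ (lam * p x + eta)
          ∂μ.toJordanDecomposition.negPart) = 0) :
    μ = 0 := by
  classical
  obtain ⟨M, hM⟩ := hσb
  set K : Set (Fin n → ℝ) := Set.Icc 0 1 with hKdef
  have hKm : MeasurableSet K := measurableSet_Icc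
  set P : Measure (Fin n → ℝ) := μ.toJordanDecomposition.posPart with hPdef
  set N : Measure (Fin n → ℝ) := μ.toJordanDecomposition.negPart with hNdef
  set νp : Measure (Fin n → ℝ) := P.restrict K with hνpdef
  set νm : Measure (Fin n → ℝ) := N.restrict K with hνmdef
  haveI : IsFiniteMeasure νp := by
    constructor
    rw [hνpdef, Measure.restrict_apply_univ]
    exact measure_lt_top P K
  haveI : IsFiniteMeasure νm := by
    constructor
    rw [hνmdef, Measure.restrict_apply_univ]
    exact measure_lt_top N K
  have hLc : ∀ y : Fin n → ℝ, Continuous fun x : Fin n → ℝ => ∑ i, y i * x i :=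
    fun y => continuous_finset_sum _ fun i _ => continuous_const.mul (continuous_apply i)
  -- Step 1: sigmoid integrals agree for all affine arguments
  have H : ∀ (y : Fin n → ℝ) (lam eta : ℝ),
      ∫ x, σ (lam * (∑ i, y i * x i) + eta) ∂νp
        = ∫ x, σ (lam * (∑ i, y i * x i) + eta) ∂νm := by
    intro y lam eta
    have h := hint _ (linear_isMultilinearPoly y) lam eta
    rw [sub_eq_zero] at h
    exact h
  -- Step 2: half-space measures agree
  have Hhalf : ∀ (y : Fin n → ℝ) (t : ℝ),
      νp ((fun x => ∑ i, y i * x i) ⁻¹' Set.Ioi t)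
        = νm ((fun x => ∑ i, y i * x i) ⁻¹' Set.Ioi t) := by
    intro y t
    have hLm : Measurable fun x : Fin n → ℝ => ∑ i, y i * x i := (hLc y).measurable
    set S := (fun x : Fin n → ℝ => ∑ i, y i * x i) ⁻¹' Set.Ioi t with hSdef
    set Eq0 := (fun x : Fin n → ℝ => ∑ i, y i * x i) ⁻¹' {t} with hEdef
    have hSm : MeasurableSet S := hLm measurableSet_Ioi
    have hEm : MeasurableSet Eq0 := hLm (measurableSet_singleton t)
    have key : ∀ φ : ℝ,
        C * (νp S).toReal + σ φ * (νp Eq0).toReal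
          = C * (νm S).toReal + σ φ * (νm Eq0).toReal := by
      intro φ
      set γ : (Fin n → ℝ) → ℝ :=
        fun x => S.indicator (fun _ => C) x + Eq0.indicator (fun _ => σ φ) x with hγdef
      have hγlim : ∀ x : Fin n → ℝ, Filter.Tendsto
          (fun k : ℕ => σ (((k : ℝ) + 1) * ((∑ i, y i * x i) - t) + φ))
          Filter.atTop (nhds (γ x)) := by
        intro x
        rcases lt_trichotomy (∑ i, y i * x i) t with hlt | heq | hgt
        · have hγx : γ x = 0 := by
            have h1 : x ∉ S := by
              simp only [hSdef, Set.mem_preimage, Set.mem_Ioi]; exact not_lt.mpr hlt.le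
            have h2 : x ∉ Eq0 := by
              simp only [hEdef, Set.mem_preimage, Set.mem_singleton_iff]; exact hlt.ne
            simp [hγdef, Set.indicator_of_notMem h1, Set.indicator_of_notMem h2]
          rw [hγx]
          refine hbot.comp ?_
          apply Filter.tendsto_atBot_add_const_right
          apply Filter.Tendsto.atTop_mul_const_of_neg (by linarith : (∑ i, y i * x i) - t < 0)
          exact Filter.tendsto_atTop_add_const_right _ _ tendsto_natCast_atTop_atTop
        · have hγx : γ x = σ φ := by
            have h1 : x ∉ S := by
              simp only [hSdef, Set.mem_preimage, Set.mem_Ioi]; exact not_lt.mpr heq.le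
            have h2 : x ∈ Eq0 := by
              simp only [hEdef, Set.mem_preimage, Set.mem_singleton_iff]; exact heq
            simp [hγdef, Set.indicator_of_notMem h1, Set.indicator_of_mem h2]
          rw [hγx]
          have hfun : (fun k : ℕ => σ (((k : ℝ) + 1) * ((∑ i, y i * x i) - t) + φ))
              = fun _ => σ φ := by
            funext k; rw [heq]; ring_nf
          rw [hfun]; exact tendsto_const_nhds
        · have hγx : γ x = C := by
            have h1 : x ∈ S := by
              simp only [hSdef, Set.mem_preimage, Set.mem_Ioi]; exact hgt
            have h2 : x ∉ Eq0 := by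
              simp only [hEdef, Set.mem_preimage, Set.mem_singleton_iff]; exact hgt.ne'
            simp [hγdef, Set.indicator_of_mem h1, Set.indicator_of_notMem h2]
          rw [hγx]
          refine htop.comp ?_
          apply Filter.tendsto_atTop_add_const_right
          apply Filter.Tendsto.atTop_mul_const (by linarith : (0:ℝ) < (∑ i, y i * x i) - t)
          exact Filter.tendsto_atTop_add_const_right _ _ tendsto_natCast_atTop_atTop
      have hγint : ∀ (ν : Measure (Fin n → ℝ)) [IsFiniteMeasure ν], ∫ x, γ x ∂ν
          = C * (ν S).toReal + σ φ * (ν Eq0).toReal := by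
        intro ν _
        rw [hγdef]
        rw [integral_add ((integrable_const C).indicator hSm)
          ((integrable_const (σ φ)).indicator hEm)]
        rw [integral_indicator_const _ hSm, integral_indicator_const _ hEm]
        simp [mul_comm, Measure.real]
      have conv : ∀ (ν : Measure (Fin n → ℝ)) [IsFiniteMeasure ν], Filter.Tendsto
          (fun k : ℕ => ∫ x, σ (((k : ℝ) + 1) * ((∑ i, y i * x i) - t) + φ) ∂ν)
          Filter.atTop (nhds (∫ x, γ x ∂ν)) := by
        intro ν _
        apply tendsto_integral_of_dominated_convergence (fun _ => M)
        · intro k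
          exact (hσm.comp (((hLm.sub_const t).const_mul _).add_const φ)).aestronglyMeasurable
        · exact integrable_const M
        · intro k
          exact Filter.Eventually.of_forall fun x => by
            rw [Real.norm_eq_abs]; exact hM _
        · exact Filter.Eventually.of_forall hγlim
      have heqk : ∀ k : ℕ,
          ∫ x, σ (((k : ℝ) + 1) * ((∑ i, y i * x i) - t) + φ) ∂νp
            = ∫ x, σ (((k : ℝ) + 1) * ((∑ i, y i * x i) - t) + φ) ∂νm := by
        intro k
        have harg : ∀ x : Fin n → ℝ, ((k : ℝ) + 1) * ((∑ i, y i * x i) - t) + φ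
            = ((k : ℝ) + 1) * (∑ i, y i * x i) + (-(((k : ℝ) + 1) * t) + φ) := by
          intro x; ring
        simp_rw [harg]
        exact H y _ _
      have l1 := conv νp
      have l2 := (conv νm).congr (fun k => (heqk k).symm)
      have hγeq := tendsto_nhds_unique l1 l2
      rw [hγint νp, hγint νm] at hγeq
      exact hγeq
    obtain ⟨φ₁, hφ₁⟩ := (Metric.tendsto_nhds.mp hbot (|C|/2) (by positivity)).exists
    obtain ⟨φ₂, hφ₂⟩ := (Metric.tendsto_nhds.mp htop (|C|/2) (by positivity)).exists
    rw [Real.dist_eq, sub_zero] at hφ₁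
    rw [Real.dist_eq] at hφ₂
    have hσne : σ φ₁ ≠ σ φ₂ := by
      intro h
      have h3 := abs_sub_abs_le_abs_sub C (σ φ₂)
      rw [abs_sub_comm] at h3
      rw [h] at hφ₁
      linarith
    have k1 := key φ₁
    have k2 := key φ₂
    have hb : (νp Eq0).toReal = (νm Eq0).toReal := by
      have hbb : (σ φ₁ - σ φ₂) * (νp Eq0).toReal = (σ φ₁ - σ φ₂) * (νm Eq0).toReal := by
        rw [sub_mul, sub_mul]; linarith
      exact mul_left_cancel₀ (sub_ne_zero.mpr hσne) hbb
    have ha : (νp S).toReal = (νm S).toReal := by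
      rw [hb] at k1
      have hcc : C * (νp S).toReal = C * (νm S).toReal := by linarith
      exact mul_left_cancel₀ hC hcc
    exact (ENNReal.toReal_eq_toReal_iff' (measure_ne_top _ _) (measure_ne_top _ _)).mp ha
  have Huniv : νp Set.univ = νm Set.univ := by
    have h := Hhalf 0 (-1)
    have huset : ((fun x : Fin n → ℝ => ∑ i, (0 : Fin n → ℝ) i * x i) ⁻¹' Set.Ioi (-1))
        = Set.univ := by
      ext x
      simp only [Set.mem_preimage, Set.mem_Ioi, Set.mem_univ, iff_true, Pi.zero_apply,
        zero_mul, Finset.sum_const_zero]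
      norm_num
    rwa [huset] at h
  -- Step 3: pushforwards agree
  have Hmap : ∀ y : Fin n → ℝ, Measure.map (fun x => ∑ i, y i * x i) νp
      = Measure.map (fun x => ∑ i, y i * x i) νm := by
    intro y
    have hLm : Measurable fun x : Fin n → ℝ => ∑ i, y i * x i := (hLc y).measurable
    refine ext_of_generate_finite (Set.range Set.Ioi)
      (BorelSpace.measurable_eq.trans (borel_eq_generateFrom_Ioi ℝ)) isPiSystem_Ioi ?_ ?_
    · rintro _ ⟨t, rfl⟩
      rw [Measure.map_apply hLm measurableSet_Ioi, Measure.map_apply hLm measurableSet_Ioi]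
      exact Hhalf y t
    · rw [Measure.map_apply hLm MeasurableSet.univ, Measure.map_apply hLm MeasurableSet.univ,
        Set.preimage_univ]
      exact Huniv
  -- Step 4: exponential integrals agree
  have Hexp : ∀ y : Fin n → ℝ, ∫ x, Real.exp (∑ i, y i * x i) ∂νp
      = ∫ x, Real.exp (∑ i, y i * x i) ∂νm := by
    intro y
    have hLm : Measurable fun x : Fin n → ℝ => ∑ i, y i * x i := (hLc y).measurable
    rw [← integral_map hLm.aemeasurable Real.continuous_exp.aestronglyMeasurable,
        ← integral_map hLm.aemeasurable Real.continuous_exp.aestronglyMeasurable, Hmap y]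
  -- Step 5: integrals of continuous functions agree
  have Hcont : ∀ F : (Fin n → ℝ) → ℝ, Continuous F →
      ∫ x, F x ∂νp = ∫ x, F x ∂νm := by
    intro F hF
    set B := (νp Set.univ).toReal + (νm Set.univ).toReal with hBdef
    have hB0 : 0 ≤ B := by positivity
    have hFip : Integrable F νp :=
      ContinuousOn.integrableOn_compact isCompact_Icc hF.continuousOn
    have hFim : Integrable F νm :=
      ContinuousOn.integrableOn_compact isCompact_Icc hF.continuousOn
    have main : ∀ ε : ℝ, 0 < ε → |∫ x, F x ∂νp - ∫ x, F x ∂νm| ≤ ε * B := by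
      intro ε hε
      obtain ⟨m, c, y, happ⟩ := sw_exp_approx F hF ε hε
      set G : (Fin n → ℝ) → ℝ := fun x => ∑ j, c j * Real.exp (∑ i, y j i * x i) with hGdef
      have hGc : Continuous G := continuous_finset_sum _ fun j _ =>
        continuous_const.mul (Real.continuous_exp.comp (hLc (y j)))
      have hGip : Integrable G νp :=
        ContinuousOn.integrableOn_compact isCompact_Icc hGc.continuousOn
      have hGim : Integrable G νm :=
        ContinuousOn.integrableOn_compact isCompact_Icc hGc.continuousOn
      have hGeq : ∫ x, G x ∂νp = ∫ x, G x ∂νm := by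
        rw [hGdef]
        have hip : ∀ j : Fin m, Integrable (fun x : Fin n → ℝ =>
            c j * Real.exp (∑ i, y j i * x i)) νp :=
          fun j => (ContinuousOn.integrableOn_compact isCompact_Icc
            (Real.continuous_exp.comp (hLc (y j))).continuousOn).const_mul (c j)
        have him : ∀ j : Fin m, Integrable (fun x : Fin n → ℝ =>
            c j * Real.exp (∑ i, y j i * x i)) νm :=
          fun j => (ContinuousOn.integrableOn_compact isCompact_Icc
            (Real.continuous_exp.comp (hLc (y j))).continuousOn).const_mul (c j)
        rw [integral_finset_sum _ (fun j _ => hip j), integral_finset_sum _ (fun j _ => him j)]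
        refine Finset.sum_congr rfl fun j _ => ?_
        rw [integral_const_mul, integral_const_mul, Hexp (y j)]
      have hdiffp : |∫ x, F x ∂νp - ∫ x, G x ∂νp| ≤ ε * (νp Set.univ).toReal := by
        rw [← integral_sub hFip hGip]
        have hb : ∀ᵐ x ∂νp, ‖F x - G x‖ ≤ ε := by
          have hmem : ∀ᵐ x ∂νp, x ∈ K := by
            rw [hνpdef]; exact ae_restrict_mem hKm
          refine hmem.mono fun x hx => ?_
          rw [Real.norm_eq_abs]; exact happ x hx
        have := norm_integral_le_of_norm_le_const hb
        rwa [Real.norm_eq_abs] at this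
      have hdiffm : |∫ x, G x ∂νm - ∫ x, F x ∂νm| ≤ ε * (νm Set.univ).toReal := by
        rw [← integral_sub hGim hFim]
        have hb : ∀ᵐ x ∂νm, ‖G x - F x‖ ≤ ε := by
          have hmem : ∀ᵐ x ∂νm, x ∈ K := by
            rw [hνmdef]; exact ae_restrict_mem hKm
          refine hmem.mono fun x hx => ?_
          rw [Real.norm_eq_abs, abs_sub_comm]; exact happ x hx
        have := norm_integral_le_of_norm_le_const hb
        rwa [Real.norm_eq_abs] at this
      have hsplit : ∫ x, F x ∂νp - ∫ x, F x ∂νm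
          = (∫ x, F x ∂νp - ∫ x, G x ∂νp) + (∫ x, G x ∂νm - ∫ x, F x ∂νm) := by
        rw [hGeq]; ring
      rw [hsplit, hBdef]
      calc |(∫ x, F x ∂νp - ∫ x, G x ∂νp) + (∫ x, G x ∂νm - ∫ x, F x ∂νm)|
          ≤ |∫ x, F x ∂νp - ∫ x, G x ∂νp| + |∫ x, G x ∂νm - ∫ x, F x ∂νm| := abs_add_le _ _
        _ ≤ ε * (νp Set.univ).toReal + ε * (νm Set.univ).toReal := add_le_add hdiffp hdiffm
        _ = ε * ((νp Set.univ).toReal + (νm Set.univ).toReal) := by ring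
    have key2 : ∀ ε : ℝ, 0 < ε → |∫ x, F x ∂νp - ∫ x, F x ∂νm| ≤ ε := by
      intro ε hε
      have h := main (ε / (B + 1)) (by positivity)
      have h2 : ε / (B + 1) * B ≤ ε := by
        rw [div_mul_eq_mul_div, div_le_iff₀ (by positivity)]
        nlinarith
      linarith
    have hD : |∫ x, F x ∂νp - ∫ x, F x ∂νm| ≤ 0 := by
      by_contra hpos
      push_neg at hpos
      linarith [key2 (|∫ x, F x ∂νp - ∫ x, F x ∂νm| / 2) (by linarith)]
    exact sub_eq_zero.mp (abs_nonpos_iff.mp hD)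
  -- Step 6: the restricted measures are equal
  have hνpm : νp = νm := by
    apply ext_of_forall_lintegral_eq_of_IsFiniteMeasure
    intro f
    have hfin1 := BoundedContinuousFunction.lintegral_lt_top_of_nnreal νp f
    have hfin2 := BoundedContinuousFunction.lintegral_lt_top_of_nnreal νm f
    have hcoe := Hcont (fun x => (f x : ℝ)) (NNReal.continuous_coe.comp f.continuous)
    have h1 := BoundedContinuousFunction.toReal_lintegral_coe_eq_integral f νp
    have h2 := BoundedContinuousFunction.toReal_lintegral_coe_eq_integral f νm
    have h3 : (∫⁻ x, (f x : ENNReal) ∂νp).toReal = (∫⁻ x, (f x : ENNReal) ∂νm).toReal := by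
      rw [h1, h2]; exact hcoe
    exact (ENNReal.toReal_eq_toReal_iff' hfin1.ne hfin2.ne).mp h3
  -- Step 7: conclude
  have hpn : ∀ A : Set (Fin n → ℝ), MeasurableSet A → P A = N A := by
    intro A hA
    have h1 : P (A ∩ K) = N (A ∩ K) := by
      calc P (A ∩ K) = νp A := (Measure.restrict_apply hA).symm
        _ = νm A := by rw [hνpm]
        _ = N (A ∩ K) := Measure.restrict_apply hA
    have h2 : P (A \ K) = N (A \ K) := by
      have hd : MeasurableSet (A \ K) := hA.diff hKm
      have hμ0 : μ (A \ K) = 0 := hsupp _ hd (fun x hx => hx.2)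
      have hrepr : μ (A \ K) = (P (A \ K)).toReal - (N (A \ K)).toReal := by
        conv_lhs => rw [← μ.toSignedMeasure_toJordanDecomposition]
        rw [JordanDecomposition.toSignedMeasure, VectorMeasure.sub_apply,
          Measure.toSignedMeasure_apply_measurable hd,
          Measure.toSignedMeasure_apply_measurable hd]
        rfl
      rw [hrepr] at hμ0
      exact (ENNReal.toReal_eq_toReal_iff' (measure_ne_top _ _) (measure_ne_top _ _)).mp
        (by linarith)
    calc P A = P (A ∩ K) + P (A \ K) := (measure_inter_add_diff A hKm).symm
      _ = N (A ∩ K) + N (A \ K) := by rw [h1, h2]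
      _ = N A := measure_inter_add_diff A hKm
  apply VectorMeasure.ext
  intro A hA
  rw [VectorMeasure.coe_zero, Pi.zero_apply]
  conv_lhs => rw [← μ.toSignedMeasure_toJordanDecomposition]
  rw [JordanDecomposition.toSignedMeasure, VectorMeasure.sub_apply,
    Measure.toSignedMeasure_apply_measurable hA, Measure.toSignedMeasure_apply_measurable hA,
    Measure.real, Measure.real, hpn A hA, sub_self]
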